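/- arXiv:2506.20351 — 2 statements merged into one kernel-verified Lean document; each statement's English description precedes it below -/
import Mathlib

section
/- Let S ⊆ 𝔽_{2^n} \ {0} with |S| = k and let S̄* be the complement of S in 𝔽_{2^n} \ {0}. Then r(S̄*) = 2^{2n} − 3(2^n − k − 1)(k + 1) − (3k + 1) − r(S). -/
open scoped Classical

noncomputable def rval {G : Type*} [AddCommGroup G] (A B C : Finset G) : ℕ :=
  ((A ×ˢ B).filter (fun p => p.1 + p.2 ∈ C)).card

noncomputable def rv {G : Type*} [AddCommGroup G] (A : Finset G) : ℕ := rval A A A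

section aux

variable {G : Type*} [AddCommGroup G]

lemma rval_union_left {A A' B C : Finset G} (h : Disjoint A A') :
    rval (A ∪ A') B C = rval A B C + rval A' B C := by
  classical
  unfold rval
  rw [Finset.union_product, Finset.filter_union, Finset.card_union_of_disjoint]
  apply Finset.disjoint_filter_filter
  rw [Finset.disjoint_left] at h ⊢
  intro p hp hp'
  simp only [Finset.mem_product] at hp hp'
  exact h hp.1 hp'.1

lemma rval_union_mid {A B B' C : Finset G} (h : Disjoint B B') :
    rval A (B ∪ B') C = rval A B C + rval A B' C := by
  classical
  unfold rval
  rw [Finset.product_union, Finset.filter_union, Finset.card_union_of_disjoint]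
  apply Finset.disjoint_filter_filter
  rw [Finset.disjoint_left] at h ⊢
  intro p hp hp'
  simp only [Finset.mem_product] at hp hp'
  exact h hp.2 hp'.2

lemma rval_union_right {A B C C' : Finset G} (h : Disjoint C C') :
    rval A B (C ∪ C') = rval A B C + rval A B C' := by
  classical
  unfold rval
  rw [← Finset.card_union_of_disjoint, ← Finset.filter_or]
  · apply Finset.card_nbij' id id <;> simp +contextual [Finset.mem_union, Set.MapsTo, Set.LeftInvOn, Set.RightInvOn]
  · rw [Finset.disjoint_left] at h ⊢
    intro p hp hp'
    simp only [Finset.mem_filter] at hp hp'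
    exact h hp.2 hp'.2

lemma rval_univ_left [Fintype G] (B C : Finset G) :
    rval Finset.univ B C = B.card * C.card := by
  classical
  unfold rval
  rw [← Finset.card_product]
  apply Finset.card_nbij' (fun p => (p.2, p.1 + p.2)) (fun q => (q.2 - q.1, q.1))
  · intro p hp
    simp only [Finset.mem_coe, Finset.mem_filter, Finset.mem_product] at hp ⊢
    exact ⟨hp.1.2, hp.2⟩
  · intro q hq
    simp only [Finset.mem_coe, Finset.mem_product] at hq
    simp only [Finset.mem_coe, Finset.mem_filter, Finset.mem_product, sub_add_cancel]
    exact ⟨⟨Finset.mem_univ _, hq.1⟩, hq.2⟩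
  · intro p _; simp
  · intro q _; simp

lemma rval_univ_mid [Fintype G] (A C : Finset G) :
    rval A Finset.univ C = A.card * C.card := by
  classical
  unfold rval
  rw [← Finset.card_product]
  apply Finset.card_nbij' (fun p => (p.1, p.1 + p.2)) (fun q => (q.1, q.2 - q.1))
  · intro p hp
    simp only [Finset.mem_coe, Finset.mem_filter, Finset.mem_product] at hp ⊢
    exact ⟨hp.1.1, hp.2⟩
  · intro q hq
    simp only [Finset.mem_coe, Finset.mem_product] at hq
    simp only [Finset.mem_coe, Finset.mem_filter, Finset.mem_product, add_sub_cancel]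
    exact ⟨⟨hq.1, Finset.mem_univ _⟩, hq.2⟩
  · intro p _; simp
  · intro q _; simp

lemma rval_univ_right [Fintype G] (A B : Finset G) :
    rval A B Finset.univ = A.card * B.card := by
  classical
  unfold rval
  rw [Finset.filter_true_of_mem (fun _ _ => Finset.mem_univ _), Finset.card_product]

lemma rval_zero_left (B C : Finset G) :
    rval {0} B C = (B.filter (· ∈ C)).card := by
  classical
  unfold rval
  apply Finset.card_nbij' (fun p => p.2) (fun b => (0, b))
  · intro p hp
    simp only [Finset.mem_coe, Finset.mem_filter, Finset.mem_product, Finset.mem_singleton] at hp ⊢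
    obtain ⟨⟨h1, h2⟩, h3⟩ := hp
    rw [h1, zero_add] at h3
    exact ⟨h2, h3⟩
  · intro b hb
    simp only [Finset.mem_coe, Finset.mem_filter] at hb
    simp [Finset.mem_filter, Finset.mem_product, hb.1, hb.2]
  · intro p hp
    simp only [Finset.mem_coe, Finset.mem_filter, Finset.mem_product, Finset.mem_singleton] at hp
    exact Prod.ext hp.1.1.symm rfl
  · intro b _; rfl

lemma rval_zero_mid (A C : Finset G) :
    rval A {0} C = (A.filter (· ∈ C)).card := by
  classical
  unfold rval
  apply Finset.card_nbij' (fun p => p.1) (fun a => (a, 0))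
  · intro p hp
    simp only [Finset.mem_coe, Finset.mem_filter, Finset.mem_product, Finset.mem_singleton] at hp ⊢
    obtain ⟨⟨h1, h2⟩, h3⟩ := hp
    rw [h2, add_zero] at h3
    exact ⟨h1, h3⟩
  · intro a ha
    simp only [Finset.mem_coe, Finset.mem_filter] at ha
    simp [Finset.mem_filter, Finset.mem_product, ha.1, ha.2]
  · intro p hp
    simp only [Finset.mem_coe, Finset.mem_filter, Finset.mem_product, Finset.mem_singleton] at hp
    exact Prod.ext rfl hp.1.2.symm
  · intro a _; rfl

lemma rval_zero_right (h2 : ∀ x : G, x + x = 0) (A B : Finset G) :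
    rval A B {0} = (A.filter (· ∈ B)).card := by
  classical
  unfold rval
  apply Finset.card_nbij' (fun p => p.1) (fun a => (a, a))
  · intro p hp
    simp only [Finset.mem_coe, Finset.mem_filter, Finset.mem_product, Finset.mem_singleton] at hp ⊢
    obtain ⟨⟨h1, hb⟩, h3⟩ := hp
    have : p.1 = p.2 := by
      have := h2 p.2
      have h4 : p.1 + p.2 + p.2 = 0 + p.2 := by rw [h3]
      rwa [add_assoc, h2 p.2, add_zero, zero_add] at h4
    exact ⟨h1, this ▸ hb⟩
  · intro a ha
    simp only [Finset.mem_coe, Finset.mem_filter] at ha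
    simp only [Finset.mem_coe, Finset.mem_filter, Finset.mem_product, Finset.mem_singleton]
    exact ⟨⟨ha.1, ha.2⟩, h2 a⟩
  · intro p hp
    simp only [Finset.mem_coe, Finset.mem_filter, Finset.mem_product, Finset.mem_singleton] at hp
    have : p.1 = p.2 := by
      have h4 : p.1 + p.2 + p.2 = 0 + p.2 := by rw [hp.2]
      rwa [add_assoc, h2 p.2, add_zero, zero_add] at h4
    exact Prod.ext rfl this
  · intro a _; rfl

end aux

theorem stmt17 (n : ℕ) (hn : 0 < n) (S : Finset (GaloisField 2 n)) (k : ℕ)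
    (h0 : (0 : GaloisField 2 n) ∉ S) (hk : S.card = k)
    (T : Finset (GaloisField 2 n))
    (hT : ∀ x : GaloisField 2 n, x ∈ T ↔ x ≠ 0 ∧ x ∉ S) :
    (rv T : ℤ) = 2 ^ (2 * n) - 3 * ((2 : ℤ) ^ n - k - 1) * (k + 1) - (3 * k + 1) - rv S := by
  classical
  letI : Fintype (GaloisField 2 n) := Fintype.ofFinite _
  have h2 : ∀ x : GaloisField 2 n, x + x = 0 := by
    intro x
    have h20 : (2 : GaloisField 2 n) = 0 := by
      have := CharP.cast_eq_zero (GaloisField 2 n) 2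
      exact_mod_cast this
    calc x + x = 2 * x := (two_mul x).symm
    _ = 0 := by rw [h20, zero_mul]
  set S' : Finset (GaloisField 2 n) := insert 0 S with hS'
  have hTc : T = S'ᶜ := by
    ext x
    simp only [Finset.mem_compl, hS', Finset.mem_insert, not_or, hT]
  have hsub : S ⊆ S' := Finset.subset_insert _ _
  have hS'card : S'.card = k + 1 := by
    rw [hS', Finset.card_insert_of_notMem h0, hk]
  have hcardG : Fintype.card (GaloisField 2 n) = 2 ^ n := by
    rw [← Nat.card_eq_fintype_card]
    exact GaloisField.card 2 n hn.ne'
  have hTcard : T.card = 2 ^ n - (k + 1) := by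
    rw [hTc, Finset.card_compl, hS'card, hcardG]
  have hk1le : k + 1 ≤ 2 ^ n := by
    calc k + 1 = S'.card := hS'card.symm
    _ ≤ Fintype.card (GaloisField 2 n) := S'.card_le_univ
    _ = 2 ^ n := hcardG
  have hTZ : (T.card : ℤ) = 2 ^ n - k - 1 := by
    rw [hTcard]
    push_cast [hk1le]
    ring
  have hdisjTS' : Disjoint T S' := hTc ▸ disjoint_compl_left
  have huniv : T ∪ S' = Finset.univ := by
    rw [hTc]
    ext x
    simp only [Finset.mem_union, Finset.mem_compl, Finset.mem_univ, iff_true]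
    exact (em _).symm
  have hdisj0S : Disjoint ({0} : Finset (GaloisField 2 n)) S := by
    rw [Finset.disjoint_left]
    intro a ha
    rw [Finset.mem_singleton] at ha
    subst ha
    exact fun hx => h0 hx
  have hins : S' = {0} ∪ S := by rw [hS', Finset.insert_eq]
  have h1 : rval T T T + rval S' T T = rval Finset.univ T T := by
    rw [← huniv, rval_union_left hdisjTS']
  have h2' : rval S' T T + rval S' S' T = rval S' Finset.univ T := by
    rw [← huniv, rval_union_mid hdisjTS']
  have h3 : rval S' S' T + rval S' S' S' = rval S' S' Finset.univ := by
    rw [← huniv, rval_union_right hdisjTS']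
  have g1 : rval S' S' S' = rval {0} S' S' + rval S S' S' := by
    rw [hins]; exact rval_union_left hdisj0S
  have g2 : rval S S' S' = rval S {0} S' + rval S S S' := by
    rw [hins]; exact rval_union_mid hdisj0S
  have g3 : rval S S S' = rval S S {0} + rval S S S := by
    rw [hins]; exact rval_union_right hdisj0S
  have v1 : rval Finset.univ T T = T.card * T.card := rval_univ_left T T
  have v2 : rval S' Finset.univ T = S'.card * T.card := rval_univ_mid S' T
  have v3 : rval S' S' Finset.univ = S'.card * S'.card := rval_univ_right S' S'
  have v4 : rval ({0} : Finset (GaloisField 2 n)) S' S' = k + 1 := by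
    rw [rval_zero_left, Finset.filter_true_of_mem (fun x hx => hx), hS'card]
  have v5 : rval S ({0} : Finset (GaloisField 2 n)) S' = k := by
    rw [rval_zero_mid, Finset.filter_true_of_mem (fun x hx => hsub hx), hk]
  have v6 : rval S S ({0} : Finset (GaloisField 2 n)) = k := by
    rw [rval_zero_right h2, Finset.filter_true_of_mem (fun x hx => hx), hk]
  rw [v1] at h1
  rw [v2] at h2'
  rw [v3] at h3
  rw [v4, g2, v5, g3, v6] at g1
  have e1 : (rval T T T : ℤ) + rval S' T T = (T.card : ℤ) * T.card := by exact_mod_cast h1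
  have e2 : (rval S' T T : ℤ) + rval S' S' T = (S'.card : ℤ) * T.card := by exact_mod_cast h2'
  have e3 : (rval S' S' T : ℤ) + rval S' S' S' = (S'.card : ℤ) * S'.card := by exact_mod_cast h3
  have e4 : (rval S' S' S' : ℤ) = (k + 1) + (k + (k + rval S S S)) := by exact_mod_cast g1
  have key : (rval T T T : ℤ) = (T.card : ℤ) * T.card - (S'.card : ℤ) * T.card
      + (S'.card : ℤ) * S'.card - rval S S S - (3 * k + 1) := by linarith
  show (rval T T T : ℤ) = 2 ^ (2 * n) - 3 * ((2 : ℤ) ^ n - k - 1) * (k + 1) - (3 * k + 1)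
      - rval S S S
  rw [key, hTZ, hS'card]
  push_cast
  rw [show (2 : ℤ) ^ (2 * n) = 2 ^ n * 2 ^ n by rw [two_mul, pow_add]]
  ring
end

section
/- Let H be an index-2 additive subgroup of 𝔽_{2^n}, A = {a₁,…,a_k} ⊆ H \ {0}, and fix b ∉ H. Let B = {b} ∪ {b + a_i : 1 ≤ i ≤ k}. Then r(A ∪ B) = 4·r(A) + 6k. -/
open scoped Classical

lemma rval_eq_sum {G : Type*} [AddCommGroup G] (A B C : Finset G) :
    rval A B C = ∑ x ∈ A, ∑ y ∈ B, if x + y ∈ C then 1 else 0 := by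
  classical
  rw [rval, Finset.card_filter, Finset.sum_product]

theorem stmt19 (n : ℕ) (hn : 0 < n) (H : AddSubgroup (GaloisField 2 n))
    (hH : H.index = 2) (A : Finset (GaloisField 2 n)) (k : ℕ)
    (hA : ∀ a ∈ A, a ∈ H ∧ a ≠ 0) (hk : A.card = k)
    (b : GaloisField 2 n) (hb : b ∉ H)
    (B : Finset (GaloisField 2 n)) (hB : B = insert b (A.image (fun a => b + a))) :
    rv (A ∪ B) = 4 * rv A + 6 * k := by
  classical
  subst hB hk
  have char2 : ∀ x : GaloisField 2 n, x + x = 0 := fun x => CharTwo.add_self_eq_zero x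
  have hAH : ∀ a ∈ A, a ∈ H := fun a ha => (hA a ha).1
  have hA0 : ∀ a ∈ A, a ≠ 0 := fun a ha => (hA a ha).2
  set B : Finset (GaloisField 2 n) := insert b (A.image (fun a => b + a)) with hBdef
  have hmix : ∀ x ∈ H, ∀ y : GaloisField 2 n, x + y ∈ H → y ∈ H := by
    intro x hx y hxy
    have h2 := H.add_mem hx hxy
    rwa [← add_assoc, char2, zero_add] at h2
  have hBnotH : ∀ y ∈ B, y ∉ H := by
    intro y hy
    rcases Finset.mem_insert.1 hy with rfl | hy
    · exact hb
    · rcases Finset.mem_image.1 hy with ⟨a, ha, rfl⟩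
      intro hmem
      exact hb (by simpa [add_assoc, char2 a] using H.add_mem hmem (hAH a ha))
  have hdisj : Disjoint A B :=
    Finset.disjoint_left.2 fun a ha hb' => hBnotH a hb' (hAH a ha)
  have hbni : b ∉ A.image (fun a => b + a) := by
    intro h
    obtain ⟨a, ha, hba⟩ := Finset.mem_image.1 h
    exact hA0 a ha (by simpa using hba)
  have hinj : ∀ x ∈ A, ∀ y ∈ A, b + x = b + y → x = y := fun x _ y _ h => by
    simpa using h
  have sumB : ∀ f : GaloisField 2 n → ℕ,
      ∑ y ∈ B, f y = f b + ∑ a ∈ A, f (b + a) := by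
    intro f
    rw [hBdef, Finset.sum_insert hbni, Finset.sum_image hinj]
  have memB : ∀ z : GaloisField 2 n, z ∈ B ↔ z = b ∨ ∃ a ∈ A, z = b + a := by
    intro z
    simp only [hBdef, Finset.mem_insert, Finset.mem_image]
    constructor
    · rintro (h | ⟨a, ha, rfl⟩)
      · exact Or.inl h
      · exact Or.inr ⟨a, ha, rfl⟩
    · rintro (h | ⟨a, ha, rfl⟩)
      · exact Or.inl h
      · exact Or.inr ⟨a, ha, rfl⟩
  have hmemU1 : ∀ z ∈ H, (z ∈ A ∪ B ↔ z ∈ A) := by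
    intro z hz
    constructor
    · intro h
      rcases Finset.mem_union.1 h with h | h
      · exact h
      · exact absurd hz (hBnotH z h)
    · exact fun h => Finset.mem_union_left _ h
  have hmemU2 : ∀ z : GaloisField 2 n, z ∉ H → (z ∈ A ∪ B ↔ z ∈ B) := by
    intro z hz
    constructor
    · intro h
      rcases Finset.mem_union.1 h with h | h
      · exact absurd (hAH z h) hz
      · exact h
    · exact fun h => Finset.mem_union_right _ h
  set I : GaloisField 2 n → ℕ := fun z => if z ∈ A ∪ B then 1 else 0 with hI
  -- the "B-shifted" inner sums
  have key : ∀ x ∈ A, ∀ a' ∈ A, I (b + (x + a')) =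
      (if x = a' then 1 else 0) + (if x + a' ∈ A then 1 else 0) := by
    intro x hx a' ha'
    have hnH : b + (x + a') ∉ H := by
      intro h
      have hxa : x + a' ∈ H := H.add_mem (hAH x hx) (hAH a' ha')
      exact hb (hmix _ hxa b (by rwa [add_comm] at h))
    have hBiff : b + (x + a') ∈ B ↔ (x = a' ∨ x + a' ∈ A) := by
      rw [memB]
      constructor
      · rintro (h | ⟨a, ha, he⟩)
        · left
          have h0 : x + a' = 0 := by rwa [add_eq_left] at h
          have h1 := congrArg (fun z => z + a') h0
          simpa [add_assoc, char2 a'] using h1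
        · right
          have : x + a' = a := by simpa using he
          rwa [this]
      · rintro (rfl | h)
        · exact Or.inl (by rw [char2, add_zero])
        · exact Or.inr ⟨x + a', h, rfl⟩
    simp only [hI]
    simp only [hmemU2 _ hnH, hBiff]
    by_cases hxa : x = a'
    · subst hxa
      have h0 : x + x ∉ A := by rw [char2]; exact fun h => hA0 0 h rfl
      simp [h0]
    · simp [hxa]
  have keysum : ∀ x ∈ A, ∑ a' ∈ A, I (b + (x + a')) = 1 + ∑ a' ∈ A, (if x + a' ∈ A then 1 else 0) := by
    intro x hx
    rw [Finset.sum_congr rfl (key x hx), Finset.sum_add_distrib,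
      Finset.sum_ite_eq A x (fun _ => 1), if_pos hx]
  -- I on an H-element reduces to membership in A
  have IH : ∀ z ∈ H, I z = (if z ∈ A then 1 else 0) := by
    intro z hz
    simp only [hI, hmemU1 _ hz]
  -- I on f-image elements equals 1
  have Ione : ∀ x ∈ A, I (b + x) = 1 := by
    intro x hx
    have hnH : b + x ∉ H := fun h => hBnotH (b + x) ((memB _).2 (Or.inr ⟨x, hx, rfl⟩)) h
    simp only [hI, hmemU2 _ hnH]
    exact if_pos ((memB _).2 (Or.inr ⟨x, hx, rfl⟩))
  have expand : rv (A ∪ B) =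
      (∑ x ∈ A, (∑ y ∈ A, I (x + y) + (I (x + b) + ∑ a' ∈ A, I (x + (b + a')))))
      + ((∑ y ∈ A, I (b + y) + (I (b + b) + ∑ a ∈ A, I (b + (b + a))))
        + ∑ a ∈ A, (∑ y ∈ A, I ((b + a) + y)
            + (I ((b + a) + b) + ∑ a' ∈ A, I ((b + a) + (b + a'))))) := by
    rw [rv, rval_eq_sum]
    simp only [Finset.sum_union hdisj, sumB, hI]
  rw [expand]
  have rvA : rv A = ∑ x ∈ A, ∑ y ∈ A, (if x + y ∈ A then 1 else 0) := rval_eq_sum A A A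
  have h1 : ∑ x ∈ A, ∑ y ∈ A, I (x + y) = rv A := by
    rw [rvA]
    exact Finset.sum_congr rfl fun x hx => Finset.sum_congr rfl fun y hy => by
      rw [IH _ (H.add_mem (hAH x hx) (hAH y hy))]
  have h2 : ∑ x ∈ A, I (x + b) = A.card := by
    have h2' : ∀ x ∈ A, I (x + b) = 1 := by
      intro x hx
      rw [add_comm x b]
      exact Ione x hx
    rw [Finset.sum_congr rfl h2', Finset.sum_const, smul_eq_mul, mul_one]
  have h3 : ∑ x ∈ A, ∑ a' ∈ A, I (x + (b + a')) = A.card + rv A := by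
    have : ∀ x ∈ A, ∑ a' ∈ A, I (x + (b + a')) = 1 + ∑ a' ∈ A, (if x + a' ∈ A then 1 else 0) := by
      intro x hx
      rw [Finset.sum_congr rfl fun a' _ => by rw [show x + (b + a') = b + (x + a') by ring]]
      exact keysum x hx
    rw [Finset.sum_congr rfl this, Finset.sum_add_distrib, Finset.sum_const, smul_eq_mul,
      mul_one, rvA]
  have h8 : ∑ y ∈ A, I (b + y) = A.card := by
    rw [Finset.sum_congr rfl Ione, Finset.sum_const, smul_eq_mul, mul_one]
  have h5 : I (b + b) = 0 := by
    rw [char2 b, IH 0 H.zero_mem]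
    exact if_neg fun h => hA0 0 h rfl
  have h6 : ∑ a ∈ A, I (b + (b + a)) = A.card := by
    have : ∀ a ∈ A, I (b + (b + a)) = 1 := by
      intro a ha
      rw [show b + (b + a) = a by rw [← add_assoc, char2, zero_add], IH _ (hAH a ha)]
      exact if_pos ha
    rw [Finset.sum_congr rfl this, Finset.sum_const, smul_eq_mul, mul_one]
  have h9 : ∑ a ∈ A, ∑ y ∈ A, I ((b + a) + y) = A.card + rv A := by
    have : ∀ a ∈ A, ∑ y ∈ A, I ((b + a) + y) = 1 + ∑ y ∈ A, (if a + y ∈ A then 1 else 0) := by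
      intro a ha
      rw [Finset.sum_congr rfl fun y _ => by rw [show (b + a) + y = b + (a + y) by ring]]
      exact keysum a ha
    rw [Finset.sum_congr rfl this, Finset.sum_add_distrib, Finset.sum_const, smul_eq_mul,
      mul_one, rvA]
  have h4 : ∑ a ∈ A, I ((b + a) + b) = A.card := by
    have : ∀ a ∈ A, I ((b + a) + b) = 1 := by
      intro a ha
      rw [show (b + a) + b = a by rw [add_comm b a, add_assoc, char2, add_zero],
        IH _ (hAH a ha)]
      exact if_pos ha
    rw [Finset.sum_congr rfl this, Finset.sum_const, smul_eq_mul, mul_one]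
  have h7 : ∑ a ∈ A, ∑ a' ∈ A, I ((b + a) + (b + a')) = rv A := by
    rw [rvA]
    refine Finset.sum_congr rfl fun a ha => Finset.sum_congr rfl fun a' ha' => ?_
    rw [show (b + a) + (b + a') = (b + b) + (a + a') by ring, char2, zero_add,
      IH _ (H.add_mem (hAH a ha) (hAH a' ha'))]
  simp only [Finset.sum_add_distrib]
  rw [h1, h2, h3, h4, h5, h6, h7, h8, h9]
  ring
end
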